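/- The Ω-cocycle bialgebra (H(∅,Ω), m, 1, Δ_λ, ε, {B⁺_ω ∣ ω ∈ Ω}) of planar rooted forests with all vertices decorated by Ω is the initial object in the category of Ω-cocycle bialgebras: for every Ω-cocycle bialgebra (H, m_H, 1_H, Δ_H, ε_H, {P_ω ∣ ω ∈ Ω}) there exists a unique k-algebra homomorphism φ : H(∅,Ω) → H which is a bialgebra morphism and satisfies φ ∘ B⁺_ω = P_ω ∘ φ for all ω ∈ Ω. -/

import Mathlib

open scoped TensorProduct

universe u v w u'

/-- Decorated planar rooted trees: internal vertices are decorated by `Ω`,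
leaves are decorated by `X ⊔ Ω` (a leaf decorated by `ω : Ω` is `node ω []`). -/
inductive PTree (X : Type u) (Ω : Type v) : Type (max u v)
  | leafX : X → PTree X Ω
  | node : Ω → List (PTree X Ω) → PTree X Ω

namespace Moerdijk

variable {X : Type u} {Ω : Type v}

/-- `ℱ(X,Ω)`: decorated planar rooted forests, i.e. the free monoid on decorated
planar rooted trees under concatenation. -/
abbrev RForest (X : Type u) (Ω : Type v) := FreeMonoid (PTree X Ω)

/-- The single-vertex forest `•ₓ` for `x ∈ X`. -/
def leafF (x : X) : RForest X Ω := FreeMonoid.of (PTree.leafX x)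

/-- Grafting of a forest onto a new common root decorated by `ω`. -/
def graft (ω : Ω) (F : RForest X Ω) : RForest X Ω :=
  FreeMonoid.of (PTree.node ω (FreeMonoid.toList F))

variable (k : Type w) [CommRing k]

/-- `H(X,Ω)`: the free `k`-module on decorated planar rooted forests, a unital
associative algebra under the concatenation product. -/
abbrev RAlg (X : Type u) (Ω : Type v) := MonoidAlgebra k (RForest X Ω)

/-- The basis element of `H(X,Ω)` corresponding to a forest `F`. -/
noncomputable def ofF (F : RForest X Ω) : RAlg k X Ω := MonoidAlgebra.of k (RForest X Ω) F

/-- The grafting operator `B⁺_ω : H(X,Ω) → H(X,Ω)` as a linear map. -/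
noncomputable def Bplus (ω : Ω) : RAlg k X Ω →ₗ[k] RAlg k X Ω :=
  MonoidAlgebra.mapDomainLinearMap k k (graft ω)

/-- The value of the coproduct `Δ_λ` on a decorated planar rooted tree:
`Δ_λ(•ₓ) = •ₓ ⊗ 1 + 1 ⊗ •ₓ + λ •ₓ ⊗ •ₓ` and
`Δ_λ(B⁺_ω(F)) = (B⁺_ω ⊗ id)Δ_λ(F) + (id ⊗ B⁺_ω)Δ_λ(F)`. -/
noncomputable def DeltaT (lam : k) : PTree X Ω → (RAlg k X Ω ⊗[k] RAlg k X Ω)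
  | .leafX x =>
      ofF k (leafF x) ⊗ₜ[k] 1 + 1 ⊗ₜ[k] ofF k (leafF x)
        + lam • (ofF k (leafF x) ⊗ₜ[k] ofF k (leafF x))
  | .node ω ts =>
      ((TensorProduct.map (Bplus k ω) LinearMap.id
        + TensorProduct.map LinearMap.id (Bplus k ω) :
          (RAlg k X Ω ⊗[k] RAlg k X Ω) →ₗ[k] (RAlg k X Ω ⊗[k] RAlg k X Ω)))
        ((ts.attach.map fun t => DeltaT lam t.1).prod)
decreasing_by
  have := List.sizeOf_lt_of_mem t.2
  simp only [PTree.node.sizeOf_spec]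
  omega

/-- The value of the coproduct `Δ_λ` on a forest: `Δ_λ(T₁⋯Tₘ) = Δ_λ(T₁)⋯Δ_λ(Tₘ)`. -/
noncomputable def DeltaF (lam : k) (F : RForest X Ω) : RAlg k X Ω ⊗[k] RAlg k X Ω :=
  ((FreeMonoid.toList F).map (DeltaT k lam)).prod

/-- The coproduct `Δ_λ : H(X,Ω) → H(X,Ω) ⊗ H(X,Ω)`. -/
noncomputable def Delta (lam : k) : RAlg k X Ω →ₗ[k] (RAlg k X Ω ⊗[k] RAlg k X Ω) :=
  (Finsupp.lsum k fun F => LinearMap.toSpanSingleton k _ (DeltaF k lam F)) ∘ₗ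
    (MonoidAlgebra.coeffLinearEquiv k).toLinearMap

/-- The counit `ε : H(X,Ω) → k`, sending the empty forest to `1` and every
nonempty forest to `0`. -/
noncomputable def eps : RAlg k X Ω →ₗ[k] k :=
  (Finsupp.lsum k fun F => LinearMap.toSpanSingleton k k
    (if (FreeMonoid.toList F).isEmpty then (1 : k) else 0)) ∘ₗ
    (MonoidAlgebra.coeffLinearEquiv k).toLinearMap

section Helpers

open Coalgebra

variable {k} {H' : Type u'} [Semiring H'] [Bialgebra k H']

lemma counit_mul'_comul (a : H') :
    LinearMap.mul' k k (TensorProduct.map (counit (R := k)) (counit (R := k)) (comul a))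
      = counit (R := k) a := by
  have h := sum_tmul_counit_eq (ℛ k a)
  apply_fun (TensorProduct.rid k H') at h
  simp only [map_sum, TensorProduct.rid_tmul] at h
  rw [← (ℛ k a).eq]
  simp only [map_sum, TensorProduct.map_tmul, LinearMap.mul'_apply]
  calc ∑ i ∈ (ℛ k a).index, counit (R := k) ((ℛ k a).left i) * counit (R := k) ((ℛ k a).right i)
      = counit (R := k) (∑ i ∈ (ℛ k a).index,
          counit (R := k) ((ℛ k a).right i) • (ℛ k a).left i) := by
        simp [map_sum, mul_comm]
    _ = counit (R := k) a := by rw [h, one_smul]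

lemma counit_P_zero (P : H' →ₗ[k] H')
    (hP : ∀ y : H', comul (R := k) (P y)
      = TensorProduct.map P LinearMap.id (comul (R := k) y)
        + TensorProduct.map LinearMap.id P (comul (R := k) y)) (x : H') :
    counit (R := k) (P x) = 0 := by
  set r := ℛ k x with hr
  have h1 := sum_counit_tmul_eq r
  apply_fun (TensorProduct.lid k H') at h1
  simp only [map_sum, TensorProduct.lid_tmul, one_smul] at h1
  have h2 := sum_tmul_counit_eq r
  apply_fun (TensorProduct.rid k H') at h2
  simp only [map_sum, TensorProduct.rid_tmul, one_smul] at h2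
  have key := congrArg (fun z => LinearMap.mul' k k
    (TensorProduct.map (counit (R := k)) (counit (R := k)) z)) (hP x)
  rw [counit_mul'_comul] at key
  rw [← r.eq] at key
  simp only [map_add, map_sum, TensorProduct.map_tmul, LinearMap.mul'_apply,
    LinearMap.id_coe, id_eq] at key
  have e1 : ∑ i ∈ r.index, counit (R := k) (P (r.left i)) * counit (R := k) (r.right i)
      = counit (R := k) (P x) := by
    conv_rhs => rw [← h2]
    simp [map_sum, map_smul, smul_eq_mul, mul_comm]
  have e2 : ∑ i ∈ r.index, counit (R := k) (r.left i) * counit (R := k) (P (r.right i))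
      = counit (R := k) (P x) := by
    conv_rhs => rw [← h1]
    simp [map_sum, map_smul, smul_eq_mul]
  rw [e1, e2, right_eq_add] at key
  exact key

/-- The unique morphism, on trees: `φ(B⁺_ω(t₁⋯tₘ)) = P_ω(φ(t₁)⋯φ(tₘ))`. -/
noncomputable def phiT (P : Ω → H' →ₗ[k] H') : PTree PEmpty.{1} Ω → H'
  | .leafX x => x.elim
  | .node ω ts => P ω ((ts.attach.map fun t => phiT P t.1).prod)
decreasing_by
  have := List.sizeOf_lt_of_mem t.2
  simp only [PTree.node.sizeOf_spec]
  omega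

variable (P : Ω → H' →ₗ[k] H')

lemma phiT_node (ω : Ω) (ts : List (PTree PEmpty.{1} Ω)) :
    phiT P (.node ω ts) = P ω ((ts.map (phiT P)).prod) := by
  rw [phiT]
  congr 2
  exact List.attach_map_val (l := ts) (f := phiT P)

/-- The unique morphism `φ : H(∅,Ω) → H'`. -/
noncomputable def phi : RAlg k PEmpty.{1} Ω →ₐ[k] H' :=
  MonoidAlgebra.lift k H' (RForest PEmpty.{1} Ω) (FreeMonoid.lift (phiT P))

lemma phi_single (F : RForest PEmpty.{1} Ω) (b : k) :
    phi P (MonoidAlgebra.single F b) = b • ((FreeMonoid.toList F).map (phiT P)).prod := by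
  rw [phi, MonoidAlgebra.lift_single, FreeMonoid.lift_apply]

lemma phi_ofF (F : RForest PEmpty.{1} Ω) :
    phi P (ofF k F) = ((FreeMonoid.toList F).map (phiT P)).prod := by
  rw [ofF, MonoidAlgebra.of_apply, phi_single, one_smul]

lemma Bplus_single (ω : Ω) (F : RForest X Ω) (b : k) :
    Bplus k ω (MonoidAlgebra.single F b) = MonoidAlgebra.single (graft ω F) b := by
  rw [Bplus]
  exact MonoidAlgebra.mapDomainLinearMap_single _ _ _

lemma phi_Bplus (ω : Ω) (y : RAlg k PEmpty.{1} Ω) :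
    phi P (Bplus k ω y) = P ω (phi P y) := by
  have h : (phi P).toLinearMap ∘ₗ Bplus k ω = P ω ∘ₗ (phi P).toLinearMap := by
    refine MonoidAlgebra.lhom_ext' fun F => LinearMap.ext fun b => ?_
    simp only [LinearMap.comp_apply, AlgHom.toLinearMap_apply, MonoidAlgebra.lsingle_apply]
    have hb := Bplus_single (k := k) (X := PEmpty.{1}) (Ω := Ω) ω F b
    erw [hb, phi_single, phi_single, map_smul]
    congr 1
    show ((FreeMonoid.toList (graft ω F)).map (phiT P)).prod = _
    rw [graft, FreeMonoid.toList_of, List.map_singleton, List.prod_singleton, phiT_node]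
  exact LinearMap.congr_fun h y

lemma Delta_single (lam : k) (F : RForest X Ω) (b : k) :
    Delta k lam (MonoidAlgebra.single F b) = b • DeltaF k lam F := by
  rw [Delta, LinearMap.comp_apply]
  exact (Finsupp.lsum_single _ _ _ _).trans (LinearMap.toSpanSingleton_apply _ _ _ _)

lemma eps_single (F : RForest X Ω) (b : k) :
    eps k (MonoidAlgebra.single F b)
      = b • (if (FreeMonoid.toList F).isEmpty then (1 : k) else 0) := by
  rw [eps, LinearMap.comp_apply]
  exact (Finsupp.lsum_single _ _ _ _).trans (LinearMap.toSpanSingleton_apply _ _ _ _)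

lemma DeltaT_node (lam : k) (ω : Ω) (ts : List (PTree X Ω)) :
    DeltaT k lam (.node ω ts)
      = ((TensorProduct.map (Bplus k ω) LinearMap.id
          + TensorProduct.map LinearMap.id (Bplus k ω) :
            (RAlg k X Ω ⊗[k] RAlg k X Ω) →ₗ[k] (RAlg k X Ω ⊗[k] RAlg k X Ω)))
        ((ts.map (DeltaT k lam)).prod) := by
  rw [DeltaT]
  congr 2
  exact List.attach_map_val (l := ts) (f := DeltaT k lam)

lemma algmap_toLin :
    (Algebra.TensorProduct.map (phi P) (phi P)).toLinearMap
      = TensorProduct.map (phi P).toLinearMap (phi P).toLinearMap := by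
  apply TensorProduct.ext'
  intro a b
  simp

variable (lam : k)

lemma comul_phiT
    (hP : ∀ (ω : Ω) (y : H'), comul (R := k) (P ω y)
      = TensorProduct.map (P ω) LinearMap.id (comul (R := k) y)
        + TensorProduct.map LinearMap.id (P ω) (comul (R := k) y)) :
    ∀ (n : ℕ) (t : PTree PEmpty.{1} Ω), sizeOf t ≤ n →
      comul (R := k) (phiT P t)
        = TensorProduct.map (phi P).toLinearMap (phi P).toLinearMap (DeltaT k lam t) := by
  intro n
  induction n with
  | zero =>
    intro t h
    cases t with
    | leafX x => exact x.elim
    | node ω ts => simp only [PTree.node.sizeOf_spec] at h; omega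
  | succ n ih =>
    intro t h
    cases t with
    | leafX x => exact x.elim
    | node ω ts =>
      simp only [PTree.node.sizeOf_spec] at h
      have hts : ∀ t' ∈ ts, sizeOf t' ≤ n := fun t' ht' => by
        have := List.sizeOf_lt_of_mem ht'; omega
      have key : ∀ l : List (PTree PEmpty.{1} Ω), (∀ t' ∈ l, sizeOf t' ≤ n) →
          comul (R := k) ((l.map (phiT P)).prod)
            = TensorProduct.map (phi P).toLinearMap (phi P).toLinearMap
                ((l.map (DeltaT k lam)).prod) := by
        intro l
        induction l with
        | nil =>
          intro _
          simp only [List.map_nil, List.prod_nil]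
          rw [← algmap_toLin P, Bialgebra.comul_one]
          exact (map_one (Algebra.TensorProduct.map (phi P) (phi P))).symm
        | cons a l ihl =>
          intro hl
          simp only [List.map_cons, List.prod_cons, Bialgebra.comul_mul]
          rw [ih a (hl a List.mem_cons_self),
            ihl (fun t' ht' => hl t' (List.mem_cons_of_mem a ht'))]
          simp only [← algmap_toLin P, AlgHom.toLinearMap_apply]
          exact (map_mul _ _ _).symm
      rw [phiT_node, hP, key ts hts, DeltaT_node]
      have hBP : (phi P).toLinearMap ∘ₗ Bplus k ω = (P ω) ∘ₗ (phi P).toLinearMap :=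
        LinearMap.ext fun y => phi_Bplus P ω y
      have c1 : TensorProduct.map (P ω) (LinearMap.id (R := k) (M := H'))
            ∘ₗ TensorProduct.map (phi P).toLinearMap (phi P).toLinearMap
          = TensorProduct.map (phi P).toLinearMap (phi P).toLinearMap
            ∘ₗ TensorProduct.map (Bplus k ω) LinearMap.id := by
        rw [← TensorProduct.map_comp, ← TensorProduct.map_comp, hBP,
          LinearMap.id_comp, LinearMap.comp_id]
      have c2 : TensorProduct.map (LinearMap.id (R := k) (M := H')) (P ω)
            ∘ₗ TensorProduct.map (phi P).toLinearMap (phi P).toLinearMap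
          = TensorProduct.map (phi P).toLinearMap (phi P).toLinearMap
            ∘ₗ TensorProduct.map LinearMap.id (Bplus k ω) := by
        rw [← TensorProduct.map_comp, ← TensorProduct.map_comp, hBP,
          LinearMap.id_comp, LinearMap.comp_id]
      have d1 := LinearMap.congr_fun c1 ((ts.map (DeltaT k lam)).prod)
      have d2 := LinearMap.congr_fun c2 ((ts.map (DeltaT k lam)).prod)
      simp only [LinearMap.comp_apply] at d1 d2
      simp only [LinearMap.add_apply, map_add]
      rw [← d1, ← d2]

lemma comul_phiF
    (hP : ∀ (ω : Ω) (y : H'), comul (R := k) (P ω y)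
      = TensorProduct.map (P ω) LinearMap.id (comul (R := k) y)
        + TensorProduct.map LinearMap.id (P ω) (comul (R := k) y))
    (l : List (PTree PEmpty.{1} Ω)) :
    comul (R := k) ((l.map (phiT P)).prod)
      = TensorProduct.map (phi P).toLinearMap (phi P).toLinearMap
          ((l.map (DeltaT k lam)).prod) := by
  induction l with
  | nil =>
    simp only [List.map_nil, List.prod_nil]
    rw [← algmap_toLin P, Bialgebra.comul_one]
    exact (map_one (Algebra.TensorProduct.map (phi P) (phi P))).symm
  | cons a l ihl =>
    simp only [List.map_cons, List.prod_cons, Bialgebra.comul_mul]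
    rw [comul_phiT P lam hP (sizeOf a) a le_rfl, ihl]
    simp only [← algmap_toLin P, AlgHom.toLinearMap_apply]
    exact (map_mul _ _ _).symm

lemma comul_phi
    (hP : ∀ (ω : Ω) (y : H'), comul (R := k) (P ω y)
      = TensorProduct.map (P ω) LinearMap.id (comul (R := k) y)
        + TensorProduct.map LinearMap.id (P ω) (comul (R := k) y))
    (y : RAlg k PEmpty.{1} Ω) :
    comul (R := k) (phi P y)
      = TensorProduct.map (phi P).toLinearMap (phi P).toLinearMap (Delta k lam y) := by
  have h : (CoalgebraStruct.comul (R := k) (A := H')) ∘ₗ (phi P).toLinearMap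
      = TensorProduct.map (phi P).toLinearMap (phi P).toLinearMap ∘ₗ Delta k lam := by
    refine MonoidAlgebra.lhom_ext' fun F => LinearMap.ext fun b => ?_
    simp only [LinearMap.comp_apply, AlgHom.toLinearMap_apply, MonoidAlgebra.lsingle_apply]
    erw [phi_single, Delta_single]
    rw [map_smul, map_smul]
    congr 1
    rw [DeltaF]
    exact comul_phiF P lam hP (FreeMonoid.toList F)
  exact LinearMap.congr_fun h y

lemma counit_phiT
    (hP : ∀ (ω : Ω) (y : H'), comul (R := k) (P ω y)
      = TensorProduct.map (P ω) LinearMap.id (comul (R := k) y)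
        + TensorProduct.map LinearMap.id (P ω) (comul (R := k) y))
    (t : PTree PEmpty.{1} Ω) : counit (R := k) (phiT P t) = 0 := by
  cases t with
  | leafX x => exact x.elim
  | node ω ts =>
    rw [phiT_node]
    exact counit_P_zero (P ω) (hP ω) _

lemma counit_phi
    (hP : ∀ (ω : Ω) (y : H'), comul (R := k) (P ω y)
      = TensorProduct.map (P ω) LinearMap.id (comul (R := k) y)
        + TensorProduct.map LinearMap.id (P ω) (comul (R := k) y))
    (y : RAlg k PEmpty.{1} Ω) : counit (R := k) (phi P y) = eps k y := by
  have h : (CoalgebraStruct.counit (R := k) (A := H')) ∘ₗ (phi P).toLinearMap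
      = eps k (X := PEmpty.{1}) (Ω := Ω) := by
    refine MonoidAlgebra.lhom_ext' fun F => LinearMap.ext fun b => ?_
    simp only [LinearMap.comp_apply, AlgHom.toLinearMap_apply, MonoidAlgebra.lsingle_apply]
    erw [phi_single, eps_single]
    rw [map_smul]
    congr 1
    cases hl : FreeMonoid.toList F with
    | nil => simp
    | cons a rest => simp [counit_phiT P hP a]
  exact LinearMap.congr_fun h y

lemma phi_unique (ψ : RAlg k PEmpty.{1} Ω →ₐ[k] H')
    (hB : ∀ (ω : Ω) (y : RAlg k PEmpty.{1} Ω), ψ (Bplus k ω y) = P ω (ψ y)) :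
    ψ = phi P := by
  have main : ∀ (n : ℕ) (t : PTree PEmpty.{1} Ω), sizeOf t ≤ n →
      ψ (ofF k (FreeMonoid.of t)) = phi P (ofF k (FreeMonoid.of t)) := by
    intro n
    induction n with
    | zero =>
      intro t h
      cases t with
      | leafX x => exact x.elim
      | node ω ts => simp only [PTree.node.sizeOf_spec] at h; omega
    | succ n ih =>
      intro t h
      cases t with
      | leafX x => exact x.elim
      | node ω ts =>
        simp only [PTree.node.sizeOf_spec] at h
        have hts : ∀ t' ∈ ts, sizeOf t' ≤ n := fun t' ht' => by
          have := List.sizeOf_lt_of_mem ht'; omega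
        have hfor : ∀ l : List (PTree PEmpty.{1} Ω), (∀ t' ∈ l, sizeOf t' ≤ n) →
            ψ (ofF k (FreeMonoid.ofList l)) = phi P (ofF k (FreeMonoid.ofList l)) := by
          intro l
          induction l with
          | nil =>
            intro _
            rw [show FreeMonoid.ofList ([] : List (PTree PEmpty.{1} Ω)) = 1 from rfl, ofF,
              map_one, map_one, map_one]
          | cons a l ihl =>
            intro hl
            rw [show FreeMonoid.ofList (a :: l) = FreeMonoid.of a * FreeMonoid.ofList l from rfl]
            have hsplit : ofF k (FreeMonoid.of a * FreeMonoid.ofList l)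
                = ofF k (FreeMonoid.of a) * ofF k (FreeMonoid.ofList l) :=
              map_mul (MonoidAlgebra.of k (RForest PEmpty.{1} Ω)) _ _
            rw [hsplit, map_mul, map_mul, ih a (hl a List.mem_cons_self),
              ihl (fun t' ht' => hl t' (List.mem_cons_of_mem a ht'))]
        have hone : (FreeMonoid.of (PTree.node ω ts) : RForest PEmpty.{1} Ω)
            = graft ω (FreeMonoid.ofList ts) := rfl
        have hBof : ofF k (graft ω (FreeMonoid.ofList ts))
            = Bplus k ω (ofF k (FreeMonoid.ofList ts)) := by
          rw [ofF, ofF, MonoidAlgebra.of_apply, MonoidAlgebra.of_apply]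
          exact (Bplus_single ω _ 1).symm
        rw [hone, hBof, hB, phi_Bplus, hfor ts hts]
  have hfor' : ∀ l : List (PTree PEmpty.{1} Ω),
      ψ (ofF k (FreeMonoid.ofList l)) = phi P (ofF k (FreeMonoid.ofList l)) := by
    intro l
    induction l with
    | nil =>
      rw [show FreeMonoid.ofList ([] : List (PTree PEmpty.{1} Ω)) = 1 from rfl, ofF,
        map_one, map_one, map_one]
    | cons a l ihl =>
      rw [show FreeMonoid.ofList (a :: l) = FreeMonoid.of a * FreeMonoid.ofList l from rfl]
      have hsplit : ofF k (FreeMonoid.of a * FreeMonoid.ofList l)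
          = ofF k (FreeMonoid.of a) * ofF k (FreeMonoid.ofList l) :=
        map_mul (MonoidAlgebra.of k (RForest PEmpty.{1} Ω)) _ _
      rw [hsplit, map_mul, map_mul, main (sizeOf a) a le_rfl, ihl]
  apply MonoidAlgebra.algHom_ext
  intro F
  exact hfor' (FreeMonoid.toList F)
  exact Subsingleton.elim _ _

end Helpers


/-- The `Ω`-cocycle bialgebra `(H(∅,Ω), m, 1, Δ_λ, ε, {B⁺_ω})` is the initial object in
the category of `Ω`-cocycle bialgebras: for every `Ω`-cocycle bialgebra `H'` there is a
unique algebra morphism `φ : H(∅,Ω) → H'` which is a bialgebra morphism and intertwines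
the operators. -/
theorem initial_cocycle_bialgebra [Nonempty Ω] (lam : k) :
    ∀ (H' : Type u') [Semiring H'] [Bialgebra k H'] (P : Ω → H' →ₗ[k] H'),
      (∀ (ω : Ω) (y : H'), Coalgebra.comul (R := k) (P ω y)
        = TensorProduct.map (P ω) LinearMap.id (Coalgebra.comul (R := k) y)
          + TensorProduct.map LinearMap.id (P ω) (Coalgebra.comul (R := k) y)) →
      ∃! φ : RAlg k PEmpty.{1} Ω →ₐ[k] H',
        (∀ (ω : Ω) (y : RAlg k PEmpty.{1} Ω), φ (Bplus k ω y) = P ω (φ y)) ∧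
        (∀ y : RAlg k PEmpty.{1} Ω, Coalgebra.comul (R := k) (φ y)
          = TensorProduct.map φ.toLinearMap φ.toLinearMap (Delta k lam y)) ∧
        (∀ y : RAlg k PEmpty.{1} Ω, Coalgebra.counit (R := k) (φ y) = eps k y) := by
  intro H' _ _ P hP
  exact ⟨phi P, ⟨fun ω y => phi_Bplus P ω y, fun y => comul_phi P lam hP y,
    fun y => counit_phi P hP y⟩, fun ψ hψ => phi_unique P ψ hψ.1⟩

end Moerdijk
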